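/- arXiv:1102.5768 — 5 statements merged into one kernel-verified Lean document; each statement's English description precedes it below -/
import Mathlib

section
/- Let H be a real inner product space and let 1 < p ≤ 2. For all x, y ∈ H one has ⟨F_p(x) − F_p(y), x − y⟩ ≥ (‖x‖^{p−1} − ‖y‖^{p−1})(‖x‖ − ‖y‖). -/
open Real
open scoped RealInnerProductSpace

/-- The p-Laplacian-type map `F_p : H → H`, `F_p x = ‖x‖^(p-2) • x` for `x ≠ 0`,
`F_p 0 = 0`. -/
noncomputable def Fp {H : Type*} [NormedAddCommGroup H] [NormedSpace ℝ H] (p : ℝ) (x : H) : H :=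
  open scoped Classical in
  if x = 0 then 0 else ‖x‖ ^ (p - 2) • x

lemma Fp_eq {H : Type*} [NormedAddCommGroup H] [NormedSpace ℝ H] (p : ℝ) (x : H) :
    Fp p x = ‖x‖ ^ (p - 2) • x := by
  unfold Fp; split <;> simp [*]

lemma rpow_helper {p : ℝ} (hp1 : 1 < p) (a : ℝ) (ha : 0 ≤ a) :
    a ^ (p - 2) * a = a ^ (p - 1) := by
  rcases ha.eq_or_lt with h | h
  · rw [← h, mul_zero, Real.zero_rpow (by linarith)]
  · rw [← Real.rpow_add_one h.ne' (p - 2)]; ring_nf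

/-- For a real inner product space `H` and `1 < p ≤ 2`, for all `x, y ∈ H` one has
`⟨F_p x − F_p y, x − y⟩ ≥ (‖x‖^(p−1) − ‖y‖^(p−1)) (‖x‖ − ‖y‖)`. -/
theorem Fp_inner_sub_ge {H : Type*} [NormedAddCommGroup H] [InnerProductSpace ℝ H]
    (p : ℝ) (hp1 : 1 < p) (hp2 : p ≤ 2) (x y : H) :
    ⟪Fp p x - Fp p y, x - y⟫ ≥ (‖x‖ ^ (p - 1) - ‖y‖ ^ (p - 1)) * (‖x‖ - ‖y‖) := by
  rw [Fp_eq, Fp_eq, inner_sub_left, inner_sub_right, inner_sub_right,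
    real_inner_smul_left, real_inner_smul_left, real_inner_smul_left, real_inner_smul_left,
    real_inner_self_eq_norm_sq, real_inner_self_eq_norm_sq, real_inner_comm y x]
  set a := ‖x‖
  set b := ‖y‖
  have ha : 0 ≤ a := norm_nonneg x
  have hb : 0 ≤ b := norm_nonneg y
  have hka : a ^ (p - 2) * a = a ^ (p - 1) := rpow_helper hp1 a ha
  have hkb : b ^ (p - 2) * b = b ^ (p - 1) := rpow_helper hp1 b hb
  have ht : ⟪y, x⟫ ≤ b * a := real_inner_le_norm y x
  have hpa : 0 ≤ a ^ (p - 2) := Real.rpow_nonneg ha _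
  have hpb : 0 ≤ b ^ (p - 2) := Real.rpow_nonneg hb _
  have hka2 : a ^ (p - 2) * a ^ 2 = a ^ (p - 1) * a := by rw [sq, ← mul_assoc, hka]
  have hkb2 : b ^ (p - 2) * b ^ 2 = b ^ (p - 1) * b := by rw [sq, ← mul_assoc, hkb]
  have h1 : a ^ (p - 2) * ⟪y, x⟫ ≤ a ^ (p - 1) * b := by
    calc a ^ (p - 2) * ⟪y, x⟫ ≤ a ^ (p - 2) * (b * a) := by
          exact mul_le_mul_of_nonneg_left ht hpa
      _ = a ^ (p - 1) * b := by rw [mul_comm b a, ← mul_assoc, hka]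
  have h2 : b ^ (p - 2) * ⟪y, x⟫ ≤ b ^ (p - 1) * a := by
    calc b ^ (p - 2) * ⟪y, x⟫ ≤ b ^ (p - 2) * (b * a) := by
          exact mul_le_mul_of_nonneg_left ht hpb
      _ = b ^ (p - 1) * a := by rw [← mul_assoc, hkb]
  nlinarith [h1, h2, hka2, hkb2]
end

section
/- Let H be a real inner product space and let 1 < p ≤ 2. For all x, y ∈ H with x ≠ y one has ⟨F_p(x) − F_p(y), x − y⟩ > 0; that is, the map F_p is strictly monotone on H. -/
open Real
open scoped RealInnerProductSpace

private lemma fp_aux (p a b ip : ℝ) (hp1 : 1 < p) (ha : 0 < a) (hb : 0 < b)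
    (h : ip < a * b ∨ (ip = a * b ∧ a ≠ b)) :
    0 < a ^ (p - 2) * a ^ 2 - a ^ (p - 2) * ip - (b ^ (p - 2) * ip - b ^ (p - 2) * b ^ 2) := by
  have f3 : a ^ (p - 2) * a = a ^ (p - 1) := by
    rw [show (p - 1) = (p - 2) + 1 by ring, Real.rpow_add ha, Real.rpow_one]
  have f4 : b ^ (p - 2) * b = b ^ (p - 1) := by
    rw [show (p - 1) = (p - 2) + 1 by ring, Real.rpow_add hb, Real.rpow_one]
  have hApos : 0 < a ^ (p - 2) := Real.rpow_pos_of_pos ha _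
  have hBpos : 0 < b ^ (p - 2) := Real.rpow_pos_of_pos hb _
  rcases h with h | ⟨heq, hab⟩
  · have key : (0:ℝ) ≤ (a ^ (p - 1) - b ^ (p - 1)) * (a - b) := by
      rcases le_total a b with hle | hle
      · have : a ^ (p - 1) ≤ b ^ (p - 1) :=
          Real.rpow_le_rpow (le_of_lt ha) hle (by linarith)
        nlinarith
      · have : b ^ (p - 1) ≤ a ^ (p - 1) :=
          Real.rpow_le_rpow (le_of_lt hb) hle (by linarith)
        nlinarith
    nlinarith [mul_lt_mul_of_pos_left h (add_pos hApos hBpos)]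
  · have key : (0:ℝ) < (a ^ (p - 1) - b ^ (p - 1)) * (a - b) := by
      rcases lt_or_gt_of_ne hab with hlt | hlt
      · have : a ^ (p - 1) < b ^ (p - 1) :=
          Real.rpow_lt_rpow (le_of_lt ha) hlt (by linarith)
        nlinarith
      · have : b ^ (p - 1) < a ^ (p - 1) :=
          Real.rpow_lt_rpow (le_of_lt hb) hlt (by linarith)
        nlinarith
    nlinarith

/-- For a real inner product space `H` and `1 < p ≤ 2`, for all `x ≠ y` in `H` one has
`⟨F_p x − F_p y, x − y⟩ > 0`: the map `F_p` is strictly monotone on `H`. -/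
theorem Fp_strictMonotone {H : Type*} [NormedAddCommGroup H] [InnerProductSpace ℝ H]
    (p : ℝ) (hp1 : 1 < p) (hp2 : p ≤ 2) (x y : H) (hxy : x ≠ y) :
    0 < ⟪Fp p x - Fp p y, x - y⟫ := by
  classical
  have hFp : ∀ z : H, z ≠ 0 → Fp p z = ‖z‖ ^ (p - 2) • z := by
    intro z hz; simp [Fp, hz]
  have hFp0 : Fp p (0 : H) = 0 := by simp [Fp]
  by_cases hx : x = 0
  · subst hx
    have hy : y ≠ 0 := fun h => hxy h.symm
    have hb : (0:ℝ) < ‖y‖ := norm_pos_iff.mpr hy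
    rw [hFp0, hFp y hy, zero_sub, zero_sub, inner_neg_neg,
      real_inner_smul_left, real_inner_self_eq_norm_sq]
    have := Real.rpow_pos_of_pos hb (p - 2)
    positivity
  · by_cases hy : y = 0
    · subst hy
      have ha : (0:ℝ) < ‖x‖ := norm_pos_iff.mpr hx
      rw [hFp0, hFp x hx, sub_zero, sub_zero,
        real_inner_smul_left, real_inner_self_eq_norm_sq]
      have := Real.rpow_pos_of_pos ha (p - 2)
      positivity
    · have ha : (0:ℝ) < ‖x‖ := norm_pos_iff.mpr hx
      have hb : (0:ℝ) < ‖y‖ := norm_pos_iff.mpr hy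
      rw [hFp x hx, hFp y hy]
      rw [inner_sub_left, inner_sub_right, inner_sub_right, real_inner_smul_left,
        real_inner_smul_left, real_inner_smul_left, real_inner_smul_left,
        real_inner_self_eq_norm_sq, real_inner_self_eq_norm_sq, real_inner_comm y x]
      apply fp_aux p ‖x‖ ‖y‖ ⟪y, x⟫ hp1 ha hb
      by_cases hcol : ‖y‖ • x = ‖x‖ • y
      · right
        constructor
        · have h1 : ⟪‖y‖ • x, y⟫ = ⟪‖x‖ • y, y⟫ := by rw [hcol]
          rw [real_inner_smul_left, real_inner_smul_left,
            real_inner_self_eq_norm_sq] at h1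
          rw [real_inner_comm]
          nlinarith [h1]
        · intro h
          apply hxy
          have : ‖y‖ • x = ‖y‖ • y := by rw [hcol, h]
          exact smul_right_injective H (ne_of_gt hb) this
      · refine Or.inl ?_
        rw [real_inner_comm]
        exact inner_lt_norm_mul_iff_real.mpr hcol
end

section
/- Let 1 < p ≤ 2. There exists a constant c > 0 (depending only on p) such that for all x, y ∈ ℝ^n with ‖x‖ + ‖y‖ > 0, one has ⟨F_p(x) − F_p(y), x − y⟩ ≥ c ‖x − y‖² / (‖x‖ + ‖y‖)^{2−p}. -/
open Real
open scoped RealInnerProductSpace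

private lemma rpow_subadd {s : ℝ} (hs0 : 0 ≤ s) (hs1 : s ≤ 1) {a b : ℝ}
    (ha : 0 ≤ a) (hb : 0 ≤ b) : (a + b) ^ s ≤ a ^ s + b ^ s := by
  lift a to NNReal using ha with a
  lift b to NNReal using hb with b
  exact_mod_cast NNReal.rpow_add_le_add_rpow a b hs0 hs1

private lemma lemA {p : ℝ} (hp1 : 1 < p) (hp2 : p ≤ 2) {a b : ℝ} (hb : 0 < b) (hba : b ≤ a) :
    (p - 1) * a ^ (p - 2) * (a - b) ≤ a ^ (p - 1) - b ^ (p - 1) := by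
  have ha : 0 < a := hb.trans_le hba
  have hbern : (b / a) ^ (p - 1) ≤ 1 + (p - 1) * (b / a - 1) := by
    have h0 : 0 ≤ b / a := by positivity
    have h := rpow_one_add_le_one_add_mul_self (s := b / a - 1)
      (by linarith) (p := p - 1) (by linarith) (by linarith)
    have hbase : 1 + (b / a - 1) = b / a := by ring
    rwa [hbase] at h
  have hap : (0:ℝ) < a ^ (p - 1) := Real.rpow_pos_of_pos ha _
  have hmul : (b / a) ^ (p - 1) * a ^ (p - 1) = b ^ (p - 1) := by
    rw [← Real.mul_rpow (by positivity) ha.le, div_mul_cancel₀ _ ha.ne']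
  have h3 := mul_le_mul_of_nonneg_right hbern hap.le
  rw [hmul] at h3
  have h2 : a ^ (p - 2) * a = a ^ (p - 1) := by
    rw [← Real.rpow_add_one ha.ne']; congr 1; ring
  have h5 : (b / a) * a ^ (p - 1) = b * a ^ (p - 2) := by
    rw [← h2]; field_simp
  have h6 : (1 + (p - 1) * (b / a - 1)) * a ^ (p - 1) =
      a ^ (p - 1) + (p - 1) * (b * a ^ (p - 2)) - (p - 1) * (a ^ (p - 2) * a) := by
    rw [← h5, h2]; ring
  rw [h6] at h3
  nlinarith [h3]

private lemma end1' {p : ℝ} (hp1 : 1 < p) (hp2 : p ≤ 2) {a b : ℝ} (hb : 0 < b) (hba : b ≤ a) :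
    (p - 1) * (a - b) ^ 2 ≤ ((a - b) * (a ^ (p - 1) - b ^ (p - 1))) * (a + b) ^ (2 - p) := by
  have ha : 0 < a := hb.trans_le hba
  have hA := lemA hp1 hp2 hb hba
  have hX : 0 ≤ a - b := by linarith
  have hapm2 : (0:ℝ) < a ^ (p - 2) := Real.rpow_pos_of_pos ha _
  have hD : 0 ≤ a ^ (p - 1) - b ^ (p - 1) :=
    le_trans (mul_nonneg (mul_nonneg (by linarith) hapm2.le) hX) hA
  have hS : a ^ (2 - p) ≤ (a + b) ^ (2 - p) :=
    Real.rpow_le_rpow ha.le (by linarith) (by linarith)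
  have hone : a ^ (p - 2) * a ^ (2 - p) = 1 := by
    rw [← Real.rpow_add ha]; norm_num
  calc (p - 1) * (a - b) ^ 2
      = ((a - b) * ((p - 1) * a ^ (p - 2) * (a - b))) * a ^ (2 - p) := by
        linear_combination (-((p - 1) * (a - b) ^ 2)) * hone
    _ ≤ ((a - b) * (a ^ (p - 1) - b ^ (p - 1))) * a ^ (2 - p) :=
        mul_le_mul_of_nonneg_right (mul_le_mul_of_nonneg_left hA hX)
          (Real.rpow_nonneg ha.le _)
    _ ≤ ((a - b) * (a ^ (p - 1) - b ^ (p - 1))) * (a + b) ^ (2 - p) :=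
        mul_le_mul_of_nonneg_left hS (mul_nonneg hX hD)

private lemma end1 {p : ℝ} (hp1 : 1 < p) (hp2 : p ≤ 2) {a b : ℝ} (ha : 0 < a) (hb : 0 < b) :
    (p - 1) * (a - b) ^ 2 ≤ ((a - b) * (a ^ (p - 1) - b ^ (p - 1))) * (a + b) ^ (2 - p) := by
  rcases le_total b a with h | h
  · exact end1' hp1 hp2 hb h
  · have h0 := end1' hp1 hp2 ha h
    rw [add_comm b a] at h0
    have h2 : ((b - a) * (b ^ (p - 1) - a ^ (p - 1))) * (a + b) ^ (2 - p)
        = ((a - b) * (a ^ (p - 1) - b ^ (p - 1))) * (a + b) ^ (2 - p) := by ring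
    have h3 : (p - 1) * (b - a) ^ 2 = (p - 1) * (a - b) ^ 2 := by ring
    linarith

private lemma core {p : ℝ} (hp1 : 1 < p) (hp2 : p ≤ 2) {a b t : ℝ}
    (ha : 0 < a) (hb : 0 < b) (ht : |t| ≤ a * b) :
    (p - 1) * (a ^ 2 - 2 * t + b ^ 2) ≤
      (a ^ p + b ^ p - (a ^ (p - 2) + b ^ (p - 2)) * t) * (a + b) ^ (2 - p) := by
  obtain ⟨htl, htu⟩ := abs_le.mp ht
  have hab : (0:ℝ) < a + b := by linarith
  have hS0 : (0:ℝ) < (a + b) ^ (2 - p) := Real.rpow_pos_of_pos hab _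
  set S := (a + b) ^ (2 - p) with hSdef
  have hida : a ^ (p - 1) * a = a ^ p := by
    rw [← Real.rpow_add_one ha.ne']; congr 1; ring
  have hidb : b ^ (p - 1) * b = b ^ p := by
    rw [← Real.rpow_add_one hb.ne']; congr 1; ring
  have hα : a ^ (p - 2) * a = a ^ (p - 1) := by
    rw [← Real.rpow_add_one ha.ne']; congr 1; ring
  have hβ : b ^ (p - 2) * b = b ^ (p - 1) := by
    rw [← Real.rpow_add_one hb.ne']; congr 1; ring
  have hid1 : (a - b) * (a ^ (p - 1) - b ^ (p - 1))
      = a ^ p + b ^ p - (a ^ (p - 2) + b ^ (p - 2)) * (a * b) := by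
    linear_combination hida + hidb + b * hα + a * hβ
  have hE1 : (p - 1) * (a - b) ^ 2 ≤
      (a ^ p + b ^ p - (a ^ (p - 2) + b ^ (p - 2)) * (a * b)) * S := by
    have h0 := end1 hp1 hp2 ha hb
    rw [hid1] at h0
    exact h0
  have hSp : (a + b) ^ (p - 1) * S = a + b := by
    rw [hSdef, ← Real.rpow_add hab]; norm_num
  have hid2 : (a + b) * (a ^ (p - 1) + b ^ (p - 1))
      = a ^ p + b ^ p + (a ^ (p - 2) + b ^ (p - 2)) * (a * b) := by
    linear_combination hida + hidb - b * hα - a * hβ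
  have hE2 : (p - 1) * (a + b) ^ 2 ≤
      (a ^ p + b ^ p + (a ^ (p - 2) + b ^ (p - 2)) * (a * b)) * S := by
    have hsub : (a + b) ^ (p - 1) ≤ a ^ (p - 1) + b ^ (p - 1) :=
      rpow_subadd (by linarith) (by linarith) ha.le hb.le
    have h1 : (p - 1) * (a + b) ^ 2 ≤ (a + b) ^ 2 := by nlinarith [sq_nonneg (a + b)]
    have h2 : (a + b) ^ 2 = ((a + b) * (a + b) ^ (p - 1)) * S := by
      linear_combination (-(a + b)) * hSp
    have h3 : ((a + b) * (a + b) ^ (p - 1)) * S ≤ ((a + b) * (a ^ (p - 1) + b ^ (p - 1))) * S :=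
      mul_le_mul_of_nonneg_right (mul_le_mul_of_nonneg_left hsub hab.le) hS0.le
    rw [hid2] at h3
    linarith
  rcases le_total ((a ^ (p - 2) + b ^ (p - 2)) * S) (2 * (p - 1)) with hc | hc
  · -- worst case at t = -a*b, use hE2
    have hprod := mul_le_mul_of_nonneg_right hc (by linarith : (0:ℝ) ≤ a * b + t)
    nlinarith [hE2, hprod]
  · -- worst case at t = a*b, use hE1
    have hprod := mul_le_mul_of_nonneg_right hc (by linarith : (0:ℝ) ≤ a * b - t)
    nlinarith [hE1, hprod]

private lemma deg_case {p : ℝ} (hp1 : 1 < p) (hp2 : p ≤ 2) {b : ℝ} (hb : 0 < b) :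
    (p - 1) * b ^ 2 / b ^ (2 - p) ≤ b ^ (p - 2) * b ^ 2 := by
  rw [div_le_iff₀ (Real.rpow_pos_of_pos hb _)]
  have hone : b ^ (p - 2) * b ^ (2 - p) = 1 := by
    rw [← Real.rpow_add hb]; norm_num
  nlinarith [sq_nonneg b, hone]

/-- Inequality (3.12) of the paper: for `1 < p ≤ 2` there is a constant `c > 0`, depending
only on `p`, such that for all `x, y ∈ ℝ^n` with `‖x‖ + ‖y‖ > 0`,
`⟨F_p x − F_p y, x − y⟩ ≥ c ‖x − y‖² / (‖x‖ + ‖y‖)^(2−p)`. -/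
theorem Fp_inner_sub_ge_quantitative (p : ℝ) (hp1 : 1 < p) (hp2 : p ≤ 2) :
    ∃ c : ℝ, 0 < c ∧ ∀ (n : ℕ) (x y : EuclideanSpace ℝ (Fin n)), 0 < ‖x‖ + ‖y‖ →
      ⟪Fp p x - Fp p y, x - y⟫ ≥ c * ‖x - y‖ ^ 2 / (‖x‖ + ‖y‖) ^ (2 - p) := by
  refine ⟨p - 1, by linarith, fun n x y hxy => ?_⟩
  by_cases hx : x = 0
  · subst hx
    have hb : 0 < ‖y‖ := by simpa using hxy
    have hy : y ≠ 0 := fun h => by simp [h] at hb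
    rw [ge_iff_le]
    have hFp0 : Fp p (0 : EuclideanSpace ℝ (Fin n)) = 0 := by simp [Fp]
    have hFpy : Fp p y = ‖y‖ ^ (p - 2) • y := by simp [Fp, hy]
    rw [hFp0, hFpy, zero_sub, zero_sub, inner_neg_neg, real_inner_smul_left,
      real_inner_self_eq_norm_sq]
    simpa [hb.ne'] using deg_case hp1 hp2 hb
  · by_cases hy : y = 0
    · subst hy
      have hb : 0 < ‖x‖ := by simpa using hxy
      rw [ge_iff_le]
      have hFp0 : Fp p (0 : EuclideanSpace ℝ (Fin n)) = 0 := by simp [Fp]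
      have hFpx : Fp p x = ‖x‖ ^ (p - 2) • x := by simp [Fp, hx]
      rw [hFp0, hFpx, sub_zero, sub_zero, real_inner_smul_left, real_inner_self_eq_norm_sq]
      simpa [hb.ne'] using deg_case hp1 hp2 hb
    · have ha : 0 < ‖x‖ := norm_pos_iff.mpr hx
      have hb : 0 < ‖y‖ := norm_pos_iff.mpr hy
      have hFpx : Fp p x = ‖x‖ ^ (p - 2) • x := by simp [Fp, hx]
      have hFpy : Fp p y = ‖y‖ ^ (p - 2) • y := by simp [Fp, hy]
      have hexp : ⟪Fp p x - Fp p y, x - y⟫ =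
          ‖x‖ ^ (p - 2) * ‖x‖ ^ 2 + ‖y‖ ^ (p - 2) * ‖y‖ ^ 2
            - (‖x‖ ^ (p - 2) + ‖y‖ ^ (p - 2)) * ⟪x, y⟫ := by
        rw [hFpx, hFpy]
        simp only [inner_sub_left, inner_sub_right, real_inner_smul_left,
          real_inner_self_eq_norm_sq]
        rw [real_inner_comm y x]
        ring
      have hnormsub : ‖x - y‖ ^ 2 = ‖x‖ ^ 2 - 2 * ⟪x, y⟫ + ‖y‖ ^ 2 := by
        exact norm_sub_sq_real x y
      have hcs : |⟪x, y⟫| ≤ ‖x‖ * ‖y‖ := abs_real_inner_le_norm x y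
      have key := core hp1 hp2 ha hb hcs
      have hida : ‖x‖ ^ (p - 2) * ‖x‖ ^ 2 = ‖x‖ ^ p := by
        rw [show (‖x‖:ℝ) ^ (2:ℕ) = ‖x‖ ^ (2:ℝ) from (Real.rpow_natCast ‖x‖ 2).symm,
          ← Real.rpow_add ha]; norm_num
      have hidb : ‖y‖ ^ (p - 2) * ‖y‖ ^ 2 = ‖y‖ ^ p := by
        rw [show (‖y‖:ℝ) ^ (2:ℕ) = ‖y‖ ^ (2:ℝ) from (Real.rpow_natCast ‖y‖ 2).symm,
          ← Real.rpow_add hb]; norm_num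
      rw [ge_iff_le, div_le_iff₀ (Real.rpow_pos_of_pos hxy _), hexp, hnormsub]
      have heq : (‖x‖ ^ (p - 2) * ‖x‖ ^ 2 + ‖y‖ ^ (p - 2) * ‖y‖ ^ 2
            - (‖x‖ ^ (p - 2) + ‖y‖ ^ (p - 2)) * ⟪x, y⟫) * (‖x‖ + ‖y‖) ^ (2 - p)
          = (‖x‖ ^ p + ‖y‖ ^ p - (‖x‖ ^ (p - 2) + ‖y‖ ^ (p - 2)) * ⟪x, y⟫)
              * (‖x‖ + ‖y‖) ^ (2 - p) := by
        rw [hida, hidb]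
      rw [heq]
      linarith [key]
end

section
/- Let (Ω, μ) be a measure space, H a real inner product space, 1 < p ≤ 2, and μ₀ > 0. Let σ, τ : Ω → H be measurable functions in L^p (MemLp p). Then the real function t ↦ (μ₀/p) ∫ ‖σ(x) + t·τ(x)‖^p dμ(x) is differentiable at t = 0 with derivative equal to μ₀ ∫ ‖σ(x)‖^{p−2} ⟨σ(x), τ(x)⟩ dμ(x), where the integrand is taken to be 0 at points where σ(x) = 0. -/
open MeasureTheory Real Classical
open scoped RealInnerProductSpace

open Filter Metric
open scoped Topology

section Aux

variable {H : Type*} [NormedAddCommGroup H] [InnerProductSpace ℝ H]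

/-- derivative of `s ↦ |s - t₀| ^ p` at `t₀` is `0` when `p > 1`. -/
lemma egd_aux_abs_rpow {p : ℝ} (hp : 1 < p) (t₀ : ℝ) :
    HasDerivAt (fun s : ℝ => |s - t₀| ^ p) 0 t₀ := by
  rw [hasDerivAt_iff_tendsto_slope]
  have hbound : ∀ s : ℝ, ‖slope (fun s : ℝ => |s - t₀| ^ p) t₀ s‖ ≤ |s - t₀| ^ (p - 1) := by
    intro s
    rcases eq_or_ne s t₀ with rfl | hs
    · simp [slope_def_field, Real.zero_rpow (by linarith : p ≠ 0),
        Real.rpow_nonneg (abs_nonneg _)]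
      positivity
    · have hst : |s - t₀| ≠ 0 := by
        simp [sub_eq_zero, hs]
      have : slope (fun s : ℝ => |s - t₀| ^ p) t₀ s = (s - t₀)⁻¹ * |s - t₀| ^ p := by
        simp [slope_def_field, Real.zero_rpow (by linarith : p ≠ 0), div_eq_inv_mul]
      rw [this]
      rw [Real.norm_eq_abs, abs_mul, abs_inv,         abs_of_nonneg (Real.rpow_nonneg (abs_nonneg _) _),
        Real.rpow_sub_one hst]
      rw [div_eq_mul_inv]
      apply le_of_eq
      ring
  refine squeeze_zero_norm hbound ?_
  have h1 : Tendsto (fun s : ℝ => |s - t₀|) (𝓝 t₀) (𝓝 0) := by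
    have : Continuous fun s : ℝ => |s - t₀| := (continuous_id.sub continuous_const).abs
    simpa using this.tendsto t₀
  have h2 : ContinuousAt (fun x : ℝ => x ^ (p - 1)) 0 :=
    Real.continuousAt_rpow_const 0 (p - 1) (Or.inr (by linarith))
  have := h2.tendsto.comp h1
  rw [Real.zero_rpow (by linarith : p - 1 ≠ 0)] at this
  exact this.mono_left nhdsWithin_le_nhds

/-- Pointwise derivative of `s ↦ ‖v + s w‖^p` for `p > 1`. -/
lemma egd_aux_hasDerivAt {p : ℝ} (hp : 1 < p) (v w : H) (t : ℝ) :
    HasDerivAt (fun s : ℝ => ‖v + s • w‖ ^ p)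
      (p * (‖v + t • w‖ ^ (p - 2) * ⟪v + t • w, w⟫)) t := by
  have hc : HasDerivAt (fun s : ℝ => v + s • w) w t := by
    simpa using ((hasDerivAt_id t).smul_const w).const_add v
  rcases eq_or_ne (v + t • w) 0 with hu | hu
  · -- degenerate case: the curve passes through the origin
    have hfun : (fun s : ℝ => ‖v + s • w‖ ^ p) = fun s : ℝ => |s - t| ^ p * ‖w‖ ^ p := by
      funext s
      have hv : v = -(t • w) := by
        rw [add_eq_zero_iff_eq_neg] at hu; exact hu
      have : v + s • w = (s - t) • w := by rw [hv, sub_smul]; abel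
      rw [this, norm_smul, Real.norm_eq_abs, Real.mul_rpow (abs_nonneg _) (norm_nonneg _)]
    rw [hfun, hu]
    simp only [inner_zero_left, mul_zero]
    simpa using (egd_aux_abs_rpow hp t).mul_const (‖w‖ ^ p)
  · -- nondegenerate case
    set u := v + t • w with hu_def
    have hq : HasDerivAt (fun s : ℝ => ⟪v + s • w, v + s • w⟫) (2 * ⟪u, w⟫) t := by
      have := hc.inner ℝ hc
      refine this.congr_deriv ?_
      rw [real_inner_comm]; ring
    have hqpos : (0:ℝ) < ⟪u, u⟫ := by
      have h0 : (0:ℝ) < ‖u‖ := norm_pos_iff.mpr hu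
      rw [real_inner_self_eq_norm_sq]; positivity
    have hr : HasDerivAt (fun s : ℝ => ⟪v + s • w, v + s • w⟫ ^ (p / 2))
        ((2 * ⟪u, w⟫) * (p / 2) * ⟪u, u⟫ ^ (p / 2 - 1)) t :=
      hq.rpow_const (Or.inl hqpos.ne')
    have hinner : ∀ y : H, ⟪y, y⟫ ^ (p / 2) = ‖y‖ ^ p := by
      intro y
      rw [real_inner_self_eq_norm_sq, ← Real.rpow_natCast ‖y‖ 2,
        ← Real.rpow_mul (norm_nonneg y)]
      norm_num
      congr 1
      ring
    have hfun : (fun s : ℝ => ⟪v + s • w, v + s • w⟫ ^ (p / 2))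
        = fun s : ℝ => ‖v + s • w‖ ^ p := funext fun s => hinner _
    rw [hfun] at hr
    convert hr using 1
    have h1 : ⟪u, u⟫ ^ (p / 2 - 1) = ‖u‖ ^ (p - 2) := by
      rw [real_inner_self_eq_norm_sq, ← Real.rpow_natCast ‖u‖ 2,
        ← Real.rpow_mul (norm_nonneg u)]
      norm_num
      ring_nf
    rw [h1]; ring

end Aux

/-- Gâteaux differentiability of the viscous energy functional
`J(σ) = (μ₀/p) ∫ ‖σ‖^p dμ` on `L^p`, `1 < p ≤ 2`, `μ₀ > 0`: for `σ, τ ∈ L^p`, the map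
`t ↦ (μ₀/p) ∫ ‖σ + t τ‖^p dμ` is differentiable at `t = 0` with derivative
`μ₀ ∫ ‖σ‖^(p−2) ⟨σ, τ⟩ dμ` (integrand taken to be `0` where `σ x = 0`). -/
theorem energy_functional_gateaux_deriv {Ω H : Type*} [MeasurableSpace Ω]
    [NormedAddCommGroup H] [InnerProductSpace ℝ H] (μ : Measure Ω)
    (p : ℝ) (hp1 : 1 < p) (hp2 : p ≤ 2) (μ₀ : ℝ) (hμ₀ : 0 < μ₀)
    (σ τ : Ω → H)
    (hσ : MemLp σ (ENNReal.ofReal p) μ) (hτ : MemLp τ (ENNReal.ofReal p) μ) :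
    HasDerivAt (fun t : ℝ => (μ₀ / p) * ∫ x, ‖σ x + t • τ x‖ ^ p ∂μ)
      (μ₀ * ∫ x, (if σ x = 0 then 0 else ‖σ x‖ ^ (p - 2) * ⟪σ x, τ x⟫) ∂μ) 0 := by
  have hp0 : (0:ℝ) < p := by linarith
  have hPtop : ENNReal.ofReal p ≠ ⊤ := ENNReal.ofReal_ne_top
  have hP0 : ENNReal.ofReal p ≠ 0 := by
    simp [ENNReal.ofReal_eq_zero, not_le, hp0]
  -- measurability of the translated curve
  have hst : ∀ t : ℝ, AEStronglyMeasurable (fun x => σ x + t • τ x) μ := fun t =>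
    hσ.1.add (hτ.1.const_smul t)
  set F' : ℝ → Ω → ℝ :=
    fun t x => p * (‖σ x + t • τ x‖ ^ (p - 2) * ⟪σ x + t • τ x, τ x⟫) with hF'def
  have hF_meas : ∀ᶠ t in nhds (0:ℝ), AEStronglyMeasurable
      (fun x => ‖σ x + t • τ x‖ ^ p) μ :=
    Filter.Eventually.of_forall fun t =>
      ((hst t).norm.aemeasurable.pow_const p).aestronglyMeasurable
  have hF_int : Integrable (fun x => ‖σ x + (0:ℝ) • τ x‖ ^ p) μ := by
    simp only [zero_smul, add_zero]
    simpa [ENNReal.toReal_ofReal hp0.le] using hσ.integrable_norm_rpow hP0 hPtop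
  have hF'_meas : AEStronglyMeasurable (F' 0) μ := by
    apply aestronglyMeasurable_const.mul
    apply AEStronglyMeasurable.mul
    · exact ((hst 0).norm.aemeasurable.pow_const (p - 2)).aestronglyMeasurable
    · exact continuous_inner.comp_aestronglyMeasurable ((hst 0).prodMk hτ.1)
  -- the dominating function
  set bound : Ω → ℝ := fun x => p * ((‖σ x‖ + ‖τ x‖) ^ (p - 1) * ‖τ x‖) with hbdef
  have h_bound : ∀ᵐ x ∂μ, ∀ t ∈ Metric.ball (0:ℝ) 1, ‖F' t x‖ ≤ bound x := by
    refine Filter.Eventually.of_forall fun x t ht => ?_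
    have htle : |t| ≤ 1 := le_of_lt (by simpa [Real.norm_eq_abs] using ht)
    set u := σ x + t • τ x with hudef
    rcases eq_or_ne u 0 with hu | hu
    · rw [hF'def]
      simp only [← hudef, hu, inner_zero_left, mul_zero, norm_zero]
      positivity
    · have hnu : (0:ℝ) < ‖u‖ := norm_pos_iff.mpr hu
      have hule : ‖u‖ ≤ ‖σ x‖ + ‖τ x‖ := by
        calc ‖u‖ ≤ ‖σ x‖ + ‖t • τ x‖ := norm_add_le _ _
        _ ≤ ‖σ x‖ + ‖τ x‖ := by
            rw [norm_smul, Real.norm_eq_abs]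
            have : |t| * ‖τ x‖ ≤ 1 * ‖τ x‖ :=
              mul_le_mul_of_nonneg_right htle (norm_nonneg _)
            linarith
      have step1 : ‖F' t x‖ = p * (‖u‖ ^ (p - 2) * |⟪u, τ x⟫|) := by
        rw [hF'def, Real.norm_eq_abs, abs_mul, abs_of_pos hp0, abs_mul,
          abs_of_nonneg (Real.rpow_nonneg (norm_nonneg _) _)]
      rw [step1, hbdef]
      have hcs : |⟪u, τ x⟫| ≤ ‖u‖ * ‖τ x‖ := abs_real_inner_le_norm _ _
      have step2 : ‖u‖ ^ (p - 2) * |⟪u, τ x⟫| ≤ ‖u‖ ^ (p - 1) * ‖τ x‖ := by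
        have h1 : ‖u‖ ^ (p - 2) * |⟪u, τ x⟫| ≤ ‖u‖ ^ (p - 2) * (‖u‖ * ‖τ x‖) :=
          mul_le_mul_of_nonneg_left hcs (Real.rpow_nonneg (norm_nonneg _) _)
        have h2 : ‖u‖ ^ (p - 2) * ‖u‖ = ‖u‖ ^ (p - 1) := by
          rw [show p - 1 = p - 2 + 1 by ring, Real.rpow_add_one hnu.ne']
        calc ‖u‖ ^ (p - 2) * |⟪u, τ x⟫| ≤ ‖u‖ ^ (p - 2) * (‖u‖ * ‖τ x‖) := h1
        _ = ‖u‖ ^ (p - 2) * ‖u‖ * ‖τ x‖ := by ring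
        _ = ‖u‖ ^ (p - 1) * ‖τ x‖ := by rw [h2]
      have step3 : ‖u‖ ^ (p - 1) * ‖τ x‖ ≤ (‖σ x‖ + ‖τ x‖) ^ (p - 1) * ‖τ x‖ :=
        mul_le_mul_of_nonneg_right
          (Real.rpow_le_rpow (norm_nonneg _) hule (by linarith)) (norm_nonneg _)
      have := le_trans step2 step3
      exact mul_le_mul_of_nonneg_left this hp0.le
  -- integrability of the dominating function
  have hb_int : Integrable bound μ := by
    have hg : MemLp (fun x => ‖σ x‖ + ‖τ x‖) (ENNReal.ofReal p) μ := hσ.norm.add hτ.norm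
    have hgr : MemLp (fun x => (‖σ x‖ + ‖τ x‖) ^ (p - 1))
        (ENNReal.ofReal p / ENNReal.ofReal (p - 1)) μ := by
      have := hg.norm_rpow_div (ENNReal.ofReal (p - 1))
      convert this using 2 with x
      rw [ENNReal.toReal_ofReal (by linarith : (0:ℝ) ≤ p - 1), Real.norm_eq_abs,
        abs_of_nonneg (by positivity)]
    have hprod : MemLp (fun x => ((‖σ x‖ + ‖τ x‖) ^ (p - 1)) • ‖τ x‖) 1 μ := by
      haveI : ENNReal.HolderTriple (ENNReal.ofReal p / ENNReal.ofReal (p - 1))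
          (ENNReal.ofReal p) 1 := by
        refine ⟨?_⟩
        rw [ENNReal.inv_div (Or.inr hPtop) (Or.inr hP0), ← one_div (ENNReal.ofReal p),
          ENNReal.div_add_div_same,
          show (1:ENNReal) = ENNReal.ofReal 1 from (ENNReal.ofReal_one).symm,
          ← ENNReal.ofReal_add (by linarith : (0:ℝ) ≤ p - 1) (by norm_num : (0:ℝ) ≤ 1),
          show p - 1 + 1 = p by ring, ENNReal.div_self hP0 hPtop]
        simp
      exact hτ.norm.smul hgr
    have := (memLp_one_iff_integrable.mp hprod).const_mul p
    simpa [hbdef, smul_eq_mul, mul_assoc] using this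
  -- differentiability along the parameter
  have h_diff : ∀ᵐ x ∂μ, ∀ t ∈ Metric.ball (0:ℝ) 1,
      HasDerivAt (fun t => ‖σ x + t • τ x‖ ^ p) (F' t x) t :=
    Filter.Eventually.of_forall fun x t _ => egd_aux_hasDerivAt hp1 (σ x) (τ x) t
  obtain ⟨-, key⟩ := hasDerivAt_integral_of_dominated_loc_of_deriv_le (ball_mem_nhds 0 one_pos)
    hF_meas hF_int hF'_meas h_bound hb_int h_diff
  have main := key.const_mul (μ₀ / p)
  refine main.congr_deriv ?_
  rw [hF'def]
  simp only [zero_smul, add_zero]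
  rw [MeasureTheory.integral_const_mul, ← mul_assoc, div_mul_cancel₀ μ₀ hp0.ne']
  congr 1
  apply integral_congr_ae
  refine Filter.Eventually.of_forall fun x => ?_
  by_cases hx : σ x = 0
  · simp [hx, Real.zero_rpow]
  · simp [hx]
end

section
/- Let (Ω, μ) be a measure space, H a real inner product space, and 1 < p ≤ 2. Let σ, τ, η : Ω → H be measurable functions in L^p (MemLp p). Then the map ℝ → ℝ given by t ↦ ∫ ‖σ(x) + t·τ(x)‖^{p−2} ⟨σ(x) + t·τ(x), η(x)⟩ dμ(x) (with the integrand taken to be 0 at points where σ(x) + t·τ(x) = 0) is continuous. -/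
open MeasureTheory Real Classical
open scoped RealInnerProductSpace

section Aux
variable {H : Type*} [NormedAddCommGroup H] [InnerProductSpace ℝ H] {p : ℝ}

private lemma gbound (hp1 : 1 < p) (u v : H) :
    |if u = 0 then 0 else ‖u‖ ^ (p - 2) * ⟪u, v⟫| ≤ ‖u‖ ^ (p - 1) * ‖v‖ := by
  split_ifs with h
  · simp only [abs_zero]
    positivity
  · have hn : (0:ℝ) < ‖u‖ := norm_pos_iff.mpr h
    calc |‖u‖ ^ (p - 2) * ⟪u, v⟫| = ‖u‖ ^ (p - 2) * |⟪u, v⟫| := by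
          rw [abs_mul, abs_of_nonneg (rpow_nonneg (norm_nonneg u) _)]
      _ ≤ ‖u‖ ^ (p - 2) * (‖u‖ * ‖v‖) := by
          exact mul_le_mul_of_nonneg_left (abs_real_inner_le_norm u v)
            (rpow_nonneg (norm_nonneg u) _)
      _ = ‖u‖ ^ (p - 1) * ‖v‖ := by
          rw [show p - 1 = (p - 2) + 1 by ring, Real.rpow_add hn, Real.rpow_one]
          ring

private lemma gcont (hp1 : 1 < p) :
    Continuous (fun uv : H × H =>
      if uv.1 = 0 then 0 else ‖uv.1‖ ^ (p - 2) * ⟪uv.1, uv.2⟫) := by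
  rw [continuous_iff_continuousAt]
  rintro ⟨u₀, v₀⟩
  by_cases h : u₀ = 0
  · subst h
    have hbd : Continuous (fun uv : H × H => ‖uv.1‖ ^ (p - 1) * ‖uv.2‖) := by
      apply Continuous.mul _ (continuous_norm.comp continuous_snd)
      have : Continuous (fun s : ℝ => s ^ (p - 1)) :=
        Real.continuous_rpow_const (by linarith)
      exact this.comp (continuous_norm.comp continuous_fst)
    have h2 : Filter.Tendsto (fun uv : H × H => ‖uv.1‖ ^ (p - 1) * ‖uv.2‖)
        (nhds ((0:H), v₀)) (nhds 0) := by
      have := hbd.continuousAt (x := ((0:H), v₀))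
      simpa [ContinuousAt, Real.zero_rpow (by linarith : p - 1 ≠ 0)] using this
    have key := squeeze_zero_norm (f := fun uv : H × H =>
        if uv.1 = 0 then (0:ℝ) else ‖uv.1‖ ^ (p - 2) * ⟪uv.1, uv.2⟫) (fun uv => by
      simpa [Real.norm_eq_abs] using gbound hp1 uv.1 uv.2) h2
    simpa [ContinuousAt] using key
  · have hev : ∀ᶠ uv : H × H in nhds (u₀, v₀), ¬ uv.1 = 0 :=
      (isOpen_compl_singleton.preimage continuous_fst).mem_nhds h
    have hg : ContinuousAt (fun uv : H × H => ‖uv.1‖ ^ (p - 2) * ⟪uv.1, uv.2⟫) (u₀, v₀) := by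
      apply ContinuousAt.mul
      · exact ContinuousAt.comp (x := (u₀, v₀)) (f := fun uv : H × H => ‖uv.1‖)
          (Real.continuousAt_rpow_const _ _ (Or.inl (norm_ne_zero_iff.mpr h)))
          continuous_fst.norm.continuousAt
      · exact continuous_inner.continuousAt
    exact hg.congr (hev.mono fun uv h1 => (if_neg h1).symm)

end Aux

open scoped ENNReal

/-- Hemicontinuity of the Gâteaux derivative of the viscous energy functional on `L^p`:
for a measure space `(Ω, μ)`, a real inner product space `H`, `1 < p ≤ 2`, and
`σ, τ, η ∈ L^p(Ω; H)`, the map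
`t ↦ ∫ ‖σ + t τ‖^(p−2) ⟨σ + t τ, η⟩ dμ`
(the integrand taken to be `0` where `σ x + t • τ x = 0`) is continuous on `ℝ`. -/
theorem integral_Fp_pairing_hemicontinuous {Ω H : Type*} [MeasurableSpace Ω]
    [NormedAddCommGroup H] [InnerProductSpace ℝ H] (μ : Measure Ω)
    (p : ℝ) (hp1 : 1 < p) (hp2 : p ≤ 2) (σ τ η : Ω → H)
    (hσ : MemLp σ (ENNReal.ofReal p) μ) (hτ : MemLp τ (ENNReal.ofReal p) μ)
    (hη : MemLp η (ENNReal.ofReal p) μ) :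
    Continuous (fun t : ℝ =>
      ∫ x, (if σ x + t • τ x = 0 then 0
            else ‖σ x + t • τ x‖ ^ (p - 2) * ⟪σ x + t • τ x, η x⟫) ∂μ) := by
  have hp0 : (0:ℝ) < p := by linarith
  have hp1' : (0:ℝ) < p - 1 := by linarith
  rw [continuous_iff_continuousAt]
  intro t₀
  set M : ℝ := |t₀| + 1 with hM
  have hMpos : 0 < M := by positivity
  -- the bound
  set w : Ω → ℝ := fun x => ‖σ x‖ + M * ‖τ x‖ with hw
  have hwnn : ∀ x, 0 ≤ w x := fun x => by positivity
  have hwmem : MemLp w (ENNReal.ofReal p) μ := hσ.norm.add (hτ.norm.const_mul M)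
  have hB1 : MemLp (fun x => w x ^ (p - 1))
      (ENNReal.ofReal p / ENNReal.ofReal (p - 1)) μ := by
    have h := hwmem.norm_rpow_div (ENNReal.ofReal (p - 1))
    have heq : (fun x => ‖w x‖ ^ (ENNReal.ofReal (p - 1)).toReal)
        = fun x => w x ^ (p - 1) := by
      funext x
      rw [Real.norm_of_nonneg (hwnn x), ENNReal.toReal_ofReal (by linarith)]
    rwa [heq] at h
  have hexp : (1:ℝ≥0∞) / 1
      = 1 / (ENNReal.ofReal p / ENNReal.ofReal (p - 1)) + 1 / ENNReal.ofReal p := by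
    rw [← ENNReal.ofReal_div_of_pos hp1', one_div, one_div, one_div,
        ← ENNReal.ofReal_inv_of_pos (div_pos hp0 hp1'),
        ← ENNReal.ofReal_inv_of_pos hp0,
        ← ENNReal.ofReal_add (by positivity) (by positivity)]
    have : (p / (p - 1))⁻¹ + p⁻¹ = 1 := by
      field_simp
      ring
    rw [this]
    simp
  have hBmem : MemLp ((fun x => w x ^ (p - 1)) • fun x => ‖η x‖) 1 μ :=
    hη.norm.smul hB1 (hpqr := ⟨by simpa [one_div] using hexp.symm⟩)
  have hBint : Integrable (fun x => w x ^ (p - 1) * ‖η x‖) μ := by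
    have := memLp_one_iff_integrable.mp hBmem
    simpa [Pi.smul_apply', smul_eq_mul, Pi.mul_def] using this
  -- dominated convergence
  apply continuousAt_of_dominated (bound := fun x => w x ^ (p - 1) * ‖η x‖)
  · filter_upwards with t
    have hmeas : AEStronglyMeasurable (fun x => (σ x + t • τ x, η x)) μ :=
      (hσ.1.add (hτ.1.const_smul t)).prodMk hη.1
    exact (gcont hp1).comp_aestronglyMeasurable hmeas
  · have hev : ∀ᶠ t : ℝ in nhds t₀, |t| < M :=
      (continuous_abs.tendsto t₀).eventually_lt_const (lt_add_one |t₀|)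
    filter_upwards [hev] with t ht
    filter_upwards with x
    have h1 : ‖σ x + t • τ x‖ ≤ w x := by
      calc ‖σ x + t • τ x‖ ≤ ‖σ x‖ + ‖t • τ x‖ := norm_add_le _ _
        _ ≤ w x := by
            rw [norm_smul, Real.norm_eq_abs]
            have : |t| * ‖τ x‖ ≤ M * ‖τ x‖ :=
              mul_le_mul_of_nonneg_right ht.le (norm_nonneg _)
            simp only [hw]; linarith
    calc ‖if σ x + t • τ x = 0 then (0:ℝ)
          else ‖σ x + t • τ x‖ ^ (p - 2) * ⟪σ x + t • τ x, η x⟫‖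
        ≤ ‖σ x + t • τ x‖ ^ (p - 1) * ‖η x‖ := by
          simpa [Real.norm_eq_abs] using gbound hp1 (σ x + t • τ x) (η x)
      _ ≤ w x ^ (p - 1) * ‖η x‖ := by
          apply mul_le_mul_of_nonneg_right _ (norm_nonneg _)
          exact Real.rpow_le_rpow (norm_nonneg _) h1 (by linarith)
  · exact hBint
  · filter_upwards with x
    have hcm : Continuous (fun t : ℝ => (σ x + t • τ x, η x)) := by
      exact (continuous_const.add (continuous_id.smul continuous_const)).prodMk
        continuous_const
    exact ((gcont hp1).comp hcm).continuousAt
end
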